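/- Let p be an odd prime and f ∈ ℤ[x] irreducible such that f(x^p) is also irreducible. Then f(x^{p^k}) is irreducible for every natural number k. -/

import Mathlib

open Polynomial

section Aux

open IntermediateField

/-- Capelli-style key lemma over `K` for monic polynomials. -/
private lemma key_monic (p : ℕ) (hp : p.Prime) (hp2 : p ≠ 2) {K : Type} [Field K] (F : K[X]) (hFm : F.Monic)
    (hF : Irreducible F) (hFp : Irreducible (F.comp (X ^ p))) (k : ℕ) :
    Irreducible (F.comp (X ^ (p ^ k))) := by
  have hFdeg : F.natDegree ≠ 0 := fun e ↦
    not_irreducible_C (F.coeff 0) (eq_C_of_natDegree_eq_zero e ▸ hF)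
  apply Polynomial.irreducible_comp hFm (monic_X_pow _) hF
  intro E _ _ x hx
  rw [Polynomial.map_pow, map_X]
  apply X_pow_sub_C_irreducible_of_prime_pow hp hp2 k
  intro b hb
  -- `b ^ p = gen`, derive contradiction by degree count
  have hxint : IsIntegral K x := by
    by_contra h
    exact hF.ne_zero (hx ▸ minpoly.eq_zero h)
  have hgen : minpoly K (AdjoinSimple.gen K x) = F := by
    exact (IntermediateField.minpoly_gen K x).trans hx
  have haev : aeval b (F.comp (X ^ p)) = 0 := by
    rw [aeval_comp]
    simp only [map_pow, aeval_X, hb]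
    exact hgen ▸ minpoly.aeval K (AdjoinSimple.gen K x)
  have hmono : (F.comp (X ^ p)).Monic :=
    hFm.comp (monic_X_pow p) (by simpa [natDegree_X_pow] using hp.ne_zero)
  have hmb : minpoly K b = F.comp (X ^ p) :=
    (minpoly.eq_of_irreducible_of_monic hFp haev hmono).symm
  have hfin : FiniteDimensional K K⟮x⟯ := IntermediateField.adjoin.finiteDimensional hxint
  have h1 := minpoly.natDegree_le (A := K) b
  have h2 : Module.finrank K K⟮x⟯ = F.natDegree := by
    rw [IntermediateField.adjoin.finrank hxint, hx]
  rw [hmb, natDegree_comp, natDegree_X_pow, h2] at h1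
  have hp2' : 2 ≤ p := hp.two_le
  nlinarith [Nat.one_le_iff_ne_zero.mpr hFdeg]

end Aux

private lemma irr_mul_C_inv_comp (F : ℚ[X]) (hF0 : F ≠ 0) (n : ℕ) :
    Irreducible ((F * C F.leadingCoeff⁻¹).comp (X ^ n)) ↔ Irreducible (F.comp (X ^ n)) := by
  have hu : IsUnit (C F.leadingCoeff⁻¹ : ℚ[X]) :=
    isUnit_C.mpr (isUnit_iff_ne_zero.mpr (inv_ne_zero (leadingCoeff_ne_zero.mpr hF0)))
  rw [mul_comp, C_comp]
  exact (Associated.irreducible_iff ⟨hu.unit, rfl⟩).symm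

/-- If `p` is an odd prime and both `f` and `f(x^p)` are irreducible in `ℤ[x]`,
then `f(x^{p^k})` is irreducible for every `k ∈ ℕ`. -/
theorem comp_xpow_prime_pow_irreducible (p : ℕ) (hp : p.Prime) (hodd : Odd p)
    (f : Polynomial ℤ) (hf : Irreducible f) (hfp : Irreducible (f.comp (X ^ p))) :
    ∀ k : ℕ, Irreducible (f.comp (X ^ (p ^ k))) := by
  intro k
  have hp2 : p ≠ 2 := by rintro rfl; exact (Nat.not_odd_iff_even.mpr even_two) hodd
  by_cases hdeg : f.natDegree = 0
  · -- constant case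
    have : f.comp (X ^ (p ^ k)) = f := by
      conv_lhs => rw [eq_C_of_natDegree_eq_zero hdeg]
      rw [C_comp, ← eq_C_of_natDegree_eq_zero hdeg]
    rw [this]; exact hf
  · have hprim : f.IsPrimitive := by
      intro r hr
      obtain ⟨g, hg⟩ := hr
      rcases hf.isUnit_or_isUnit hg with h | h
      · exact isUnit_C.mp h
      · exfalso
        obtain ⟨u, -, hu⟩ := Polynomial.isUnit_iff.mp h
        apply hdeg
        rw [hg, ← hu, ← C_mul, natDegree_C]
    have hprimc : ∀ n, 0 < n → (f.comp (X ^ n)).IsPrimitive := by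
      intro n hn r hr
      apply hprim r
      rw [C_dvd_iff_dvd_coeff] at hr ⊢
      intro i
      have := hr (n * i)
      rwa [← expand_eq_comp_X_pow, coeff_expand_mul' hn] at this
    -- move to ℚ
    set F : ℚ[X] := f.map (Int.castRingHom ℚ) with hFdef
    have hmapcomp : ∀ n : ℕ, (f.comp (X ^ n)).map (Int.castRingHom ℚ) = F.comp (X ^ n) := by
      intro n
      rw [Polynomial.map_comp, Polynomial.map_pow, map_X]
    have hF : Irreducible F :=
      (Polynomial.IsPrimitive.Int.irreducible_iff_irreducible_map_cast hprim).mp hf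
    have hFp : Irreducible (F.comp (X ^ p)) := by
      rw [← hmapcomp]
      exact (Polynomial.IsPrimitive.Int.irreducible_iff_irreducible_map_cast
        (hprimc p hp.pos)).mp hfp
    have hF0 : F ≠ 0 := hF.ne_zero
    -- monic normalization
    set G : ℚ[X] := F * C F.leadingCoeff⁻¹ with hGdef
    have hGm : G.Monic := monic_mul_leadingCoeff_inv hF0
    have hu : IsUnit (C F.leadingCoeff⁻¹ : ℚ[X]) :=
      isUnit_C.mpr (isUnit_iff_ne_zero.mpr (inv_ne_zero (leadingCoeff_ne_zero.mpr hF0)))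
    have hG : Irreducible G := (Associated.irreducible_iff ⟨hu.unit, rfl⟩).mp hF
    have hGp : Irreducible (G.comp (X ^ p)) := (irr_mul_C_inv_comp F hF0 p).mpr hFp
    have hGk : Irreducible (G.comp (X ^ (p ^ k))) := key_monic p hp hp2 G hGm hG hGp k
    have hFk : Irreducible (F.comp (X ^ (p ^ k))) := (irr_mul_C_inv_comp F hF0 (p ^ k)).mp hGk
    rw [Polynomial.IsPrimitive.Int.irreducible_iff_irreducible_map_cast
      (hprimc (p ^ k) (pow_pos hp.pos k)), hmapcomp]
    exact hFk
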